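/- Let M = (m_{k,n})_{k,n∈ℕ} be a Rosenthal matrix such that ‖M‖_∞ ≤ 1 and m_{k,n} = 0 whenever n ≤ k. Then for every positive integer l there is a partition {P_1, …, P_l} of ℕ into l pieces such that M is (1/l)-fragmented by P_i for every 1 ≤ i ≤ l. -/
import Mathlib


/-- A *Rosenthal matrix* is a matrix `M = (m_{k,n})` of non-negative reals whose rows are
summable and such that `‖M‖_∞ = sup_k Σ_n m_{k,n}` is finite. -/
def IsRosenthalMatrix (M : ℕ → ℕ → ℝ) : Prop :=
  (∀ k n, 0 ≤ M k n) ∧ (∀ k, Summable (M k)) ∧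
    BddAbove (Set.range fun k => ∑' n, M k n)

/-- `M` is `ε`-fragmented by `A`: for every `k ∈ A`, `Σ_{n ∈ A \ {k}} m_{k,n} ≤ ε`. -/
def Fragments (M : ℕ → ℕ → ℝ) (ε : ℝ) (A : Set ℕ) : Prop :=
  ∀ k ∈ A, ∑' n : (A \ {k} : Set ℕ), M k ↑n ≤ ε


/-- `‖M‖_∞`, the supremum of the row sums of `M`. -/
noncomputable def rosNorm (M : ℕ → ℕ → ℝ) : ℝ := ⨆ k, ∑' n, M k n


section Aux

variable (M : ℕ → ℕ → ℝ) (l : ℕ) (hl : 0 < l) (N : ℕ)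

/-- pick a color minimizing the sum of row `k` over `Ioc k N` colored by `prev`. -/
noncomputable def pickColor (k : ℕ) (prev : ℕ → Fin l) : Fin l :=
  (Finset.exists_min_image (Finset.univ : Finset (Fin l))
    (fun i => ∑ n ∈ (Finset.Ioc k N).filter (fun n => prev n = i), M k n)
    ⟨⟨0, hl⟩, Finset.mem_univ _⟩).choose

lemma pickColor_spec (k : ℕ) (prev : ℕ → Fin l) :
    ∀ i : Fin l,
      ∑ n ∈ (Finset.Ioc k N).filter (fun n => prev n = pickColor M l hl N k prev), M k n ≤
      ∑ n ∈ (Finset.Ioc k N).filter (fun n => prev n = i), M k n := by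
  have h := (Finset.exists_min_image (Finset.univ : Finset (Fin l))
    (fun i => ∑ n ∈ (Finset.Ioc k N).filter (fun n => prev n = i), M k n)
    ⟨⟨0, hl⟩, Finset.mem_univ _⟩).choose_spec
  intro i
  exact h.2 i (Finset.mem_univ i)

/-- backwards-recursive coloring of `[0,N]`. -/
noncomputable def EE : ℕ → ℕ → Fin l
  | 0 => fun _ => ⟨0, hl⟩
  | (m+1) => fun k => if N - k ≤ m then EE m k else pickColor M l hl N k (EE m)

lemma EE_stable {k m m' : ℕ} (h : N - k ≤ m) (h' : m ≤ m') :
    EE M l hl N m' k = EE M l hl N m k := by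
  induction m' with
  | zero => rw [Nat.le_zero.mp h']
  | succ m' ih =>
      rcases Nat.lt_or_ge m (m'+1) with hlt | hge
      · have : N - k ≤ m' := le_trans h (Nat.lt_succ_iff.mp hlt)
        simp only [EE]; rw [if_pos this, ih (Nat.lt_succ_iff.mp hlt)]
      · have : m = m' + 1 := le_antisymm h' hge
        rw [this]

end Aux

section Aux2

variable (M : ℕ → ℕ → ℝ) (l : ℕ) (hl : 0 < l) (N : ℕ)

/-- the final coloring for stage `N`. -/
noncomputable def cN : ℕ → Fin l := EE M l hl N (N+1)

lemma finite_bound (hM : IsRosenthalMatrix M) (hnorm : rosNorm M ≤ 1) (k : ℕ) :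
    ∑ n ∈ (Finset.Ioc k N).filter (fun n => cN M l hl N n = cN M l hl N k), M k n
      ≤ 1 / l := by
  have hl' : (0 : ℝ) < l := by exact_mod_cast hl
  rcases le_or_gt N k with hNk | hkN
  · rw [Finset.Ioc_eq_empty (by omega), Finset.filter_empty, Finset.sum_empty]
    positivity
  · set m : ℕ := N - k - 1 with hm
    have hNkm : N - k = m + 1 := by omega
    have hck : cN M l hl N k = pickColor M l hl N k (EE M l hl N m) := by
      have h1 : EE M l hl N (N+1) k = EE M l hl N (m+1) k :=
        EE_stable M l hl N (m := m+1) (m' := N+1) (by omega) (by omega)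
      show EE M l hl N (N+1) k = _
      rw [h1]
      simp only [EE]
      rw [if_neg (by omega)]
    have hcn : ∀ n ∈ Finset.Ioc k N, cN M l hl N n = EE M l hl N m n := by
      intro n hn
      simp only [Finset.mem_Ioc] at hn
      exact EE_stable M l hl N (by omega) (by omega)
    have hfilter : (Finset.Ioc k N).filter (fun n => cN M l hl N n = cN M l hl N k) =
        (Finset.Ioc k N).filter
          (fun n => EE M l hl N m n = pickColor M l hl N k (EE M l hl N m)) := by
      apply Finset.filter_congr
      intro n hn
      rw [hcn n hn, hck]
    rw [hfilter]
    set pc := pickColor M l hl N k (EE M l hl N m) with hpc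
    set f : Fin l → ℝ := fun i =>
      ∑ n ∈ (Finset.Ioc k N).filter (fun n => EE M l hl N m n = i), M k n with hf
    have hmin : ∀ i, f pc ≤ f i := pickColor_spec M l hl N k (EE M l hl N m)
    have htot : ∑ i : Fin l, f i = ∑ n ∈ Finset.Ioc k N, M k n := by
      exact Finset.sum_fiberwise _ _ _
    have hrow : ∑ n ∈ Finset.Ioc k N, M k n ≤ 1 := by
      calc ∑ n ∈ Finset.Ioc k N, M k n ≤ ∑' n, M k n :=
            Summable.sum_le_tsum _ (fun n _ => hM.1 k n) (hM.2.1 k)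
        _ ≤ rosNorm M := le_ciSup hM.2.2 k
        _ ≤ 1 := hnorm
    have hlf : (l : ℝ) * f pc ≤ 1 := by
      calc (l : ℝ) * f pc = ∑ _i : Fin l, f pc := by
            rw [Finset.sum_const, Finset.card_univ, Fintype.card_fin, nsmul_eq_mul]
        _ ≤ ∑ i : Fin l, f i := Finset.sum_le_sum (fun i _ => hmin i)
        _ = ∑ n ∈ Finset.Ioc k N, M k n := htot
        _ ≤ 1 := hrow
    rw [le_div_iff₀ hl', mul_comm]
    exact hlf

end Aux2

/-- Lemma: if `M` is a Rosenthal matrix with `‖M‖_∞ ≤ 1` which is upper triangular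
(`m_{k,n} = 0` whenever `n ≤ k`), then for every positive `l` there is a partition of `ℕ`
into `l` pieces each of which `(1/l)`-fragments `M`. -/
theorem triangular_paving_above_diagonal (M : ℕ → ℕ → ℝ) (hM : IsRosenthalMatrix M)
    (hnorm : rosNorm M ≤ 1) (htriang : ∀ k n, n ≤ k → M k n = 0)
    (l : ℕ) (hl : 0 < l) :
    ∃ P : Fin l → Set ℕ, (⋃ i, P i) = Set.univ ∧ Pairwise (Function.onFun Disjoint P) ∧
      ∀ i, Fragments M (1 / l) (P i) := by
  -- the sequence of finite-stage colorings
  set cs : ℕ → (ℕ → Fin l) := fun N => cN M l hl N with hcs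
  obtain ⟨c, φ, hφ, hconv⟩ := CompactSpace.tendsto_subseq cs
  -- eventual agreement on each coordinate
  have hev : ∀ n : ℕ, ∀ᶠ j in Filter.atTop, cs (φ j) n = c n := by
    intro n
    have h1 : Filter.Tendsto (fun j => (cs ∘ φ) j n) Filter.atTop (nhds (c n)) :=
      tendsto_pi_nhds.mp hconv n
    rw [nhds_discrete, Filter.tendsto_pure] at h1
    exact h1
  refine ⟨fun i => {n | c n = i}, ?_, ?_, ?_⟩
  · ext n
    simp only [Set.mem_iUnion, Set.mem_setOf_eq, Set.mem_univ, iff_true]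
    exact ⟨c n, rfl⟩
  · intro i j hij
    simp only [Function.onFun]
    rw [Set.disjoint_left]
    rintro n (hn : c n = i) (hn' : c n = j)
    exact hij (hn ▸ hn')
  · intro i k hk
    simp only [Set.mem_setOf_eq] at hk
    apply Summable.tsum_le_of_sum_le ((hM.2.1 k).subtype _)
    intro s
    set F : Finset ℕ := s.image Subtype.val with hF
    have hsum : ∑ x ∈ s, M k ↑x = ∑ n ∈ F, M k n :=
      (Finset.sum_image (fun x _ y _ h => Subtype.val_injective h)).symm
    rw [show ∑ i_1 ∈ s, (M k ∘ Subtype.val) i_1 = ∑ x ∈ s, M k ↑x from rfl, hsum]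
    have hFmem : ∀ n ∈ F, c n = i ∧ n ≠ k := by
      intro n hn
      rw [hF] at hn
      obtain ⟨x, _, rfl⟩ := Finset.mem_image.mp hn
      exact ⟨x.2.1, fun h => x.2.2 h⟩
    -- pick a good stage
    have hev2 : ∀ᶠ j in Filter.atTop, ∀ n ∈ insert k F, cs (φ j) n = c n :=
      (Filter.eventually_all_finset _).mpr (fun n _ => hev n)
    have hev3 : ∀ᶠ j in Filter.atTop, ∀ n ∈ F, n ≤ φ j := by
      rcases F.eq_empty_or_nonempty with h | h
      · simp [h]
      · filter_upwards [Filter.eventually_ge_atTop (F.max' h)] with j hj n hn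
        exact le_trans (F.le_max' n hn) (le_trans hj (hφ.le_apply))
    obtain ⟨j, hj1, hj2⟩ := (hev2.and hev3).exists
    set N := φ j with hN
    have hkc : cs N k = c k := hj1 k (Finset.mem_insert_self _ _)
    have hsub : F.filter (fun n => k < n) ⊆
        (Finset.Ioc k N).filter (fun n => cN M l hl N n = cN M l hl N k) := by
      intro n hn
      obtain ⟨hnF, hkn⟩ := Finset.mem_filter.mp hn
      refine Finset.mem_filter.mpr ⟨Finset.mem_Ioc.mpr ⟨hkn, hj2 n hnF⟩, ?_⟩
      have h1 : cs N n = c n := hj1 n (Finset.mem_insert_of_mem hnF)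
      show cs N n = cs N k
      rw [h1, hkc, (hFmem n hnF).1, hk]
    calc ∑ n ∈ F, M k n = ∑ n ∈ F.filter (fun n => k < n), M k n := by
          refine (Finset.sum_filter_of_ne ?_).symm
          intro n _ hne
          by_contra h
          exact hne (htriang k n (by omega))
      _ ≤ ∑ n ∈ (Finset.Ioc k N).filter (fun n => cN M l hl N n = cN M l hl N k), M k n :=
          Finset.sum_le_sum_of_subset_of_nonneg hsub (fun n _ _ => hM.1 k n)
      _ ≤ 1 / l := finite_bound M l hl N hM hnorm k
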